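/- Let g_(1), g_(2), g_(3) be monic polynomials of degrees ≥ 1 over an integral domain with Res(g_(1), g_(2), g_(3)) ≠ 0. Then Res(g_(1), g_(2), g_(3)) = Res(g_(1), g_(2)·g_(3)) · Res(g_(2), g_(3)), where the right-hand resultants are classical two-polynomial resultants. In particular, over a discrete valuation ring with uniformizer π, val_π(Res(g_(1),g_(2),g_(3))) = val_π(Res(g_(1), g_(2)g_(3))) + val_π(Res(g_(2), g_(3))). -/

import Mathlib

open Polynomial Finset

/-- The global column position of an index in the block-structured resultant matrix. -/
def resPos {n : ℕ} {m : Fin n → ℕ} (q : (k : Fin n) × Fin (m k)) : ℕ :=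
  (∑ j ∈ Finset.univ.filter (fun j => j < q.1), m j) + (q.2 : ℕ)

/-- The matrix `A(g_(1), …, g_(n))` whose block of `deg g_(k)` rows consists of the
successively shifted coefficient rows of `∏_{j ≠ k} g_(j)`. -/
noncomputable def resMatrix {R : Type*} [CommRing R] {n : ℕ} (g : Fin n → Polynomial R) :
    Matrix ((k : Fin n) × Fin ((g k).natDegree)) ((k : Fin n) × Fin ((g k).natDegree)) R :=
  fun p q =>
    if (p.2 : ℕ) ≤ resPos q then
      (∏ j ∈ Finset.univ.erase p.1, g j).coeff (resPos q - (p.2 : ℕ))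
    else 0

/-- The generalized resultant `Res(g_(1), …, g_(n)) = det A(g_(1), …, g_(n))`. -/
noncomputable def genRes {R : Type*} [CommRing R] {n : ℕ} (g : Fin n → Polynomial R) : R :=
  (resMatrix g).det

lemma resPos_apply {n : ℕ} {m : Fin n → ℕ} (k : ℕ) (hk : k < n) (i : Fin (m ⟨k,hk⟩)) :
    resPos (⟨⟨k,hk⟩, i⟩ : (k : Fin n) × Fin (m k))
      = (∑ j ∈ Finset.univ.filter (fun j : Fin n => (j : ℕ) < k), m j) + (i : ℕ) := by
  simp [resPos, Fin.lt_def]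

lemma sum_band {R : Type*} [CommRing R] (a b : Polynomial R) (i P D : ℕ)
    (h : i + b.natDegree < D) :
    (∑ j ∈ Finset.range D, if i ≤ j ∧ j ≤ P then b.coeff (j - i) * a.coeff (P - j) else 0)
      = if i ≤ P then (a * b).coeff (P - i) else 0 := by
  by_cases hip : i ≤ P
  · rw [if_pos hip, mul_comm, Polynomial.coeff_mul,
      Finset.Nat.sum_antidiagonal_eq_sum_range_succ_mk]
    have hiD : i ≤ D := by omega
    rw [Finset.range_eq_Ico, ← Finset.sum_Ico_consecutive _ (Nat.zero_le i) hiD]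
    have h0 : ∑ j ∈ Finset.Ico 0 i,
        (if i ≤ j ∧ j ≤ P then b.coeff (j - i) * a.coeff (P - j) else 0) = 0 := by
      apply Finset.sum_eq_zero
      intro j hj
      simp only [Finset.mem_Ico] at hj
      rw [if_neg (by omega)]
    rw [h0, zero_add, Finset.sum_Ico_eq_sum_range]
    have hFG : ∀ k : ℕ, (if i ≤ i + k ∧ i + k ≤ P then b.coeff (i + k - i) * a.coeff (P - (i + k)) else 0)
        = (if k ≤ P - i then b.coeff k * a.coeff (P - i - k) else 0) := by
      intro k
      rcases le_or_gt k (P - i) with hk | hk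
      · rw [if_pos (by omega), if_pos hk]
        congr 2 <;> omega
      · rw [if_neg (by omega), if_neg (by omega)]
    simp only [hFG]
    set G : ℕ → R := fun k => if k ≤ P - i then b.coeff k * a.coeff (P - i - k) else 0 with hG
    have hGz : ∀ k : ℕ, D - i ≤ k ∨ P - i + 1 ≤ k → G k = 0 := by
      intro k hk
      rcases hk with hk | hk
      · rcases le_or_gt k (P - i) with h1 | h1
        · have : b.natDegree < k := by omega
          simp [hG, Polynomial.coeff_eq_zero_of_natDegree_lt this]
        · simp [hG, if_neg (by omega : ¬ k ≤ P - i)]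
      · simp [hG, if_neg (by omega : ¬ k ≤ P - i)]
    have ext1 : ∑ k ∈ Finset.range (D - i), G k = ∑ k ∈ Finset.range (D - i + (P - i + 1)), G k := by
      apply Finset.sum_subset (Finset.range_subset_range.2 (Nat.le_add_right _ _))
      intro k _ hk
      exact hGz k (Or.inl (by simpa using hk))
    have ext2 : ∑ k ∈ Finset.range (P - i + 1), G k = ∑ k ∈ Finset.range (D - i + (P - i + 1)), G k := by
      apply Finset.sum_subset (Finset.range_subset_range.2 (Nat.le_add_left _ _))
      intro k _ hk
      exact hGz k (Or.inr (by simpa using hk))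
    rw [ext1, ← ext2]
    apply Finset.sum_congr rfl
    intro k hk
    simp only [Finset.mem_range, Nat.lt_succ_iff] at hk
    simp [hG, if_pos hk]
  · rw [if_neg hip]
    apply Finset.sum_eq_zero
    intro j _
    rw [if_neg (by omega)]

def sigmaTwo (m : Fin 2 → ℕ) : ((k : Fin 2) × Fin (m k)) ≃ (Fin (m 0) ⊕ Fin (m 1)) where
  toFun p := match p with
    | ⟨⟨0,_⟩, i⟩ => Sum.inl i
    | ⟨⟨1,_⟩, i⟩ => Sum.inr i
  invFun s := match s with
    | Sum.inl i => ⟨0, i⟩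
    | Sum.inr i => ⟨1, i⟩
  left_inv := by rintro ⟨⟨k,hk⟩, i⟩; interval_cases k <;> rfl
  right_inv := by rintro (i | i) <;> rfl

section

variable {R : Type*} [CommRing R] (g₁ g₂ g₃ : Polynomial R)

def myPhi : ((k : Fin 3) × Fin ((![g₁,g₂,g₃] k).natDegree)) ≃
    (Fin (g₁.natDegree) ⊕ ((k : Fin 2) × Fin ((![g₂,g₃] k).natDegree))) where
  toFun p := match p with
    | ⟨⟨0,_⟩, i⟩ => Sum.inl i
    | ⟨⟨1,_⟩, i⟩ => Sum.inr ⟨0, i⟩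
    | ⟨⟨2,_⟩, i⟩ => Sum.inr ⟨1, i⟩
  invFun s := match s with
    | Sum.inl i => ⟨0, i⟩
    | Sum.inr ⟨⟨0,_⟩, i⟩ => ⟨1, i⟩
    | Sum.inr ⟨⟨1,_⟩, i⟩ => ⟨2, i⟩
  left_inv := by rintro ⟨⟨k,hk⟩, i⟩; interval_cases k <;> rfl
  right_inv := by
    rintro (i | ⟨⟨k,hk⟩, i⟩)
    · rfl
    · interval_cases k <;> rfl

noncomputable def myE (hdeg : (g₂ * g₃).natDegree = g₂.natDegree + g₃.natDegree) :
    ((k : Fin 3) × Fin ((![g₁,g₂,g₃] k).natDegree)) ≃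
    ((k : Fin 2) × Fin ((![g₁,g₂*g₃] k).natDegree)) :=
  (myPhi g₁ g₂ g₃).trans <|
    ((Equiv.refl (Fin g₁.natDegree)).sumCongr
      (((sigmaTwo _).trans finSumFinEquiv).trans (finCongr hdeg.symm))).trans
    (sigmaTwo (fun k => ((![g₁,g₂*g₃] : Fin 2 → Polynomial R) k).natDegree)).symm

lemma key3 (hdeg : (g₂ * g₃).natDegree = g₂.natDegree + g₃.natDegree) :
    genRes ![g₁,g₂,g₃] = genRes ![g₁,g₂*g₃] * genRes ![g₂,g₃] := by
  classical
  have h02 : (0:ℕ) < 2 := by omega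
  have h12 : (1:ℕ) < 2 := by omega
  have hf3_0 : Finset.univ.filter (fun j : Fin 3 => (j:ℕ) < 0) = ∅ := by decide
  have hf3_1 : Finset.univ.filter (fun j : Fin 3 => (j:ℕ) < 1) = {0} := by decide
  have hf3_2 : Finset.univ.filter (fun j : Fin 3 => (j:ℕ) < 2) = {0,1} := by decide
  have hf2_0 : Finset.univ.filter (fun j : Fin 2 => (j:ℕ) < 0) = ∅ := by decide
  have hf2_1 : Finset.univ.filter (fun j : Fin 2 => (j:ℕ) < 1) = {0} := by decide
  have hmain : resMatrix ![g₁,g₂,g₃]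
      = ((Matrix.fromBlocks (1 : Matrix (Fin g₁.natDegree) (Fin g₁.natDegree) R) 0 0
            (resMatrix ![g₂,g₃])).submatrix (myPhi g₁ g₂ g₃) (myPhi g₁ g₂ g₃))
        * ((resMatrix ![g₁, g₂*g₃]).submatrix (myE g₁ g₂ g₃ hdeg) (myE g₁ g₂ g₃ hdeg)) := by
    ext p q
    have hPq : resPos (myE g₁ g₂ g₃ hdeg q) = resPos q := by
      rcases q with ⟨⟨kq,hkq⟩,j⟩
      interval_cases kq
      · rw [show myE g₁ g₂ g₃ hdeg ⟨⟨0,hkq⟩,j⟩ = ⟨⟨0,by omega⟩, ⟨(j:ℕ), j.isLt⟩⟩ from rfl,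
            resPos_apply, resPos_apply, hf2_0, hf3_0]
        simp
      · rw [show myE g₁ g₂ g₃ hdeg ⟨⟨1,hkq⟩,j⟩ = ⟨⟨1,h12⟩, ⟨(j:ℕ), by
              have hj : (j:ℕ) < g₂.natDegree := j.isLt
              show (j:ℕ) < (g₂*g₃).natDegree
              omega⟩⟩ from rfl,
            resPos_apply, resPos_apply, hf2_1, hf3_1, Finset.sum_singleton, Finset.sum_singleton]
        rfl
      · rw [show myE g₁ g₂ g₃ hdeg ⟨⟨2,hkq⟩,j⟩ = ⟨⟨1,h12⟩, ⟨g₂.natDegree + (j:ℕ), by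
              have hj : (j:ℕ) < g₃.natDegree := j.isLt
              show g₂.natDegree + (j:ℕ) < (g₂*g₃).natDegree
              omega⟩⟩ from rfl,
            resPos_apply, resPos_apply, hf2_1, hf3_2, Finset.sum_singleton,
            Finset.sum_insert (by decide), Finset.sum_singleton]
        show g₁.natDegree + (g₂.natDegree + (j:ℕ)) = g₁.natDegree + g₂.natDegree + (j:ℕ)
        omega
    -- products
    have hprod3_0 : ∀ h : (0:ℕ) < 3,
        ∏ j ∈ Finset.univ.erase (⟨0,h⟩:Fin 3), ![g₁,g₂,g₃] j = g₂ * g₃ := by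
      intro h
      rw [show (⟨0,h⟩:Fin 3) = 0 from rfl,
        show Finset.univ.erase (0:Fin 3) = {1,2} from by decide,
        Finset.prod_insert (by decide), Finset.prod_singleton]
      rfl
    have hprod3_1 : ∀ h : (1:ℕ) < 3,
        ∏ j ∈ Finset.univ.erase (⟨1,h⟩:Fin 3), ![g₁,g₂,g₃] j = g₁ * g₃ := by
      intro h
      rw [show (⟨1,h⟩:Fin 3) = 1 from rfl,
        show Finset.univ.erase (1:Fin 3) = {0,2} from by decide,
        Finset.prod_insert (by decide), Finset.prod_singleton]
      rfl
    have hprod3_2 : ∀ h : (2:ℕ) < 3,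
        ∏ j ∈ Finset.univ.erase (⟨2,h⟩:Fin 3), ![g₁,g₂,g₃] j = g₁ * g₂ := by
      intro h
      rw [show (⟨2,h⟩:Fin 3) = 2 from rfl,
        show Finset.univ.erase (2:Fin 3) = {0,1} from by decide,
        Finset.prod_insert (by decide), Finset.prod_singleton]
      rfl
    have hprod2_0 : ∏ j ∈ Finset.univ.erase (⟨0,h02⟩:Fin 2), ![g₁, g₂*g₃] j = g₂ * g₃ := by
      rw [show (⟨0,h02⟩:Fin 2) = 0 from rfl,
        show Finset.univ.erase (0:Fin 2) = {1} from by decide, Finset.prod_singleton]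
      rfl
    have hprod2_1 : ∏ j ∈ Finset.univ.erase (⟨1,h12⟩:Fin 2), ![g₁, g₂*g₃] j = g₁ := by
      rw [show (⟨1,h12⟩:Fin 2) = 1 from rfl,
        show Finset.univ.erase (1:Fin 2) = {0} from by decide, Finset.prod_singleton]
      rfl
    have hprodJ0 : ∏ j ∈ Finset.univ.erase (⟨0,h02⟩:Fin 2), ![g₂, g₃] j = g₃ := by
      rw [show (⟨0,h02⟩:Fin 2) = 0 from rfl,
        show Finset.univ.erase (0:Fin 2) = {1} from by decide, Finset.prod_singleton]
      rfl
    have hprodJ1 : ∏ j ∈ Finset.univ.erase (⟨1,h12⟩:Fin 2), ![g₂, g₃] j = g₂ := by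
      rw [show (⟨1,h12⟩:Fin 2) = 1 from rfl,
        show Finset.univ.erase (1:Fin 2) = {0} from by decide, Finset.prod_singleton]
      rfl
    -- positions in J
    have hposJ0 : ∀ (v : ℕ) (hv : v < ((![g₂,g₃] : Fin 2 → Polynomial R) ⟨0,h02⟩).natDegree),
        resPos (⟨⟨0,h02⟩,⟨v,hv⟩⟩ : (k : Fin 2) × Fin ((![g₂,g₃] k).natDegree)) = v := by
      intro v hv
      rw [resPos_apply, hf2_0]
      simp
    have hposJ1 : ∀ (v : ℕ) (hv : v < ((![g₂,g₃] : Fin 2 → Polynomial R) ⟨1,h12⟩).natDegree),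
        resPos (⟨⟨1,h12⟩,⟨v,hv⟩⟩ : (k : Fin 2) × Fin ((![g₂,g₃] k).natDegree))
          = g₂.natDegree + v := by
      intro v hv
      rw [resPos_apply, hf2_1, Finset.sum_singleton]
      rfl
    -- rows of N
    have hNrow : ∀ (k : ℕ) (hk : k < 2) (v : ℕ) (hv : v < ((![g₁,g₂*g₃] : Fin 2 → Polynomial R) ⟨k, hk⟩).natDegree),
        resMatrix ![g₁,g₂*g₃] ⟨⟨k,hk⟩, ⟨v,hv⟩⟩ (myE g₁ g₂ g₃ hdeg q)
          = if v ≤ resPos q then (∏ j ∈ Finset.univ.erase (⟨k,hk⟩ : Fin 2), ![g₁,g₂*g₃] j).coeff (resPos q - v) else 0 := by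
      intro k hk v hv
      show (if v ≤ resPos (myE g₁ g₂ g₃ hdeg q) then
        (∏ j ∈ Finset.univ.erase (⟨k,hk⟩ : Fin 2), ![g₁,g₂*g₃] j).coeff (resPos (myE g₁ g₂ g₃ hdeg q) - v) else 0) = _
      rw [hPq]
    -- rows of S
    have hSrow : ∀ (k : ℕ) (hk : k < 2) (v : ℕ) (hv : v < ((![g₂,g₃] : Fin 2 → Polynomial R) ⟨k, hk⟩).natDegree)
        (q' : (k : Fin 2) × Fin ((![g₂,g₃] k).natDegree)),
        resMatrix ![g₂,g₃] ⟨⟨k,hk⟩, ⟨v,hv⟩⟩ q'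
          = if v ≤ resPos q' then (∏ j ∈ Finset.univ.erase (⟨k,hk⟩ : Fin 2), ![g₂,g₃] j).coeff (resPos q' - v) else 0 :=
      fun _ _ _ _ _ => rfl
    -- φ and e values at literal block indices
    have hφ0 : ∀ i' : Fin ((![g₁,g₂,g₃] (0:Fin 3)).natDegree),
        myPhi g₁ g₂ g₃ ⟨0,i'⟩ = (Sum.inl ⟨(i':ℕ), show (i':ℕ) < g₁.natDegree from i'.isLt⟩ : Fin g₁.natDegree ⊕ ((k : Fin 2) × Fin ((![g₂,g₃] k).natDegree))) := fun _ => rfl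
    have hφ1 : ∀ i' : Fin ((![g₁,g₂,g₃] (1:Fin 3)).natDegree),
        myPhi g₁ g₂ g₃ ⟨1,i'⟩ = (Sum.inr ⟨⟨0,h02⟩, ⟨(i':ℕ), show (i':ℕ) < ((![g₂,g₃] : Fin 2 → Polynomial R) ⟨0,h02⟩).natDegree from i'.isLt⟩⟩ : Fin g₁.natDegree ⊕ ((k : Fin 2) × Fin ((![g₂,g₃] k).natDegree))) := fun _ => rfl
    have hφ2 : ∀ i' : Fin ((![g₁,g₂,g₃] (2:Fin 3)).natDegree),
        myPhi g₁ g₂ g₃ ⟨2,i'⟩ = (Sum.inr ⟨⟨1,h12⟩, ⟨(i':ℕ), show (i':ℕ) < ((![g₂,g₃] : Fin 2 → Polynomial R) ⟨1,h12⟩).natDegree from i'.isLt⟩⟩ : Fin g₁.natDegree ⊕ ((k : Fin 2) × Fin ((![g₂,g₃] k).natDegree))) := fun _ => rfl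
    have he0 : ∀ i' : Fin ((![g₁,g₂,g₃] (0:Fin 3)).natDegree),
        myE g₁ g₂ g₃ hdeg ⟨0,i'⟩ = ⟨⟨0,h02⟩, ⟨(i':ℕ), show (i':ℕ) < ((![g₁,g₂*g₃] : Fin 2 → Polynomial R) ⟨0,h02⟩).natDegree from i'.isLt⟩⟩ := fun _ => rfl
    have he1 : ∀ i' : Fin ((![g₁,g₂,g₃] (1:Fin 3)).natDegree),
        myE g₁ g₂ g₃ hdeg ⟨1,i'⟩ = ⟨⟨1,h12⟩, ⟨(i':ℕ), by
          have hx : (i':ℕ) < g₂.natDegree := i'.isLt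
          show (i':ℕ) < (g₂*g₃).natDegree
          omega⟩⟩ := fun _ => rfl
    have he2 : ∀ i' : Fin ((![g₁,g₂,g₃] (2:Fin 3)).natDegree),
        myE g₁ g₂ g₃ hdeg ⟨2,i'⟩ = ⟨⟨1,h12⟩, ⟨g₂.natDegree + (i':ℕ), by
          have hx : (i':ℕ) < g₃.natDegree := i'.isLt
          show g₂.natDegree + (i':ℕ) < (g₂*g₃).natDegree
          omega⟩⟩ := fun _ => rfl
    rw [Matrix.mul_apply]
    simp only [Matrix.submatrix_apply]
    rw [← Finset.univ_sigma_univ, Finset.sum_sigma, Fin.sum_univ_three]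
    rcases p with ⟨⟨kp, hkp⟩, ip⟩
    interval_cases kp
    · -- block 0 row
      change Fin ((![g₁,g₂,g₃] (0:Fin 3)).natDegree) at ip
      have hφp : myPhi g₁ g₂ g₃ ⟨⟨0,hkp⟩,ip⟩ = (Sum.inl ⟨(ip:ℕ), show (ip:ℕ) < g₁.natDegree from ip.isLt⟩ : Fin g₁.natDegree ⊕ ((k : Fin 2) × Fin ((![g₂,g₃] k).natDegree))) := rfl
      have hL : resMatrix ![g₁,g₂,g₃] ⟨⟨0,hkp⟩,ip⟩ q
          = if (ip:ℕ) ≤ resPos q then (g₂*g₃).coeff (resPos q - (ip:ℕ)) else 0 := by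
        show (if (ip:ℕ) ≤ resPos q then
          (∏ j ∈ Finset.univ.erase (⟨0,hkp⟩:Fin 3), ![g₁,g₂,g₃] j).coeff (resPos q - (ip:ℕ)) else 0) = _
        rw [hprod3_0 hkp]
      rw [hL]
      simp only [hφp, hφ0, hφ1, hφ2, he0, Matrix.fromBlocks_apply₁₁, Matrix.fromBlocks_apply₁₂,
        Matrix.zero_apply, zero_mul, Finset.sum_const_zero, add_zero, Matrix.one_apply,
        hNrow, hprod2_0, ite_mul, one_mul, Fin.mk.injEq, Fin.val_inj]
      rw [Finset.sum_ite_eq]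
      simp
      exact fun h => absurd (Finset.mem_univ _) h
    · -- block 1 row
      have hφp : myPhi g₁ g₂ g₃ ⟨⟨1,hkp⟩,ip⟩ = (Sum.inr ⟨⟨0,h02⟩, ⟨(ip:ℕ), show (ip:ℕ) < ((![g₂,g₃] : Fin 2 → Polynomial R) ⟨0,h02⟩).natDegree from ip.isLt⟩⟩ : Fin g₁.natDegree ⊕ ((k : Fin 2) × Fin ((![g₂,g₃] k).natDegree))) := rfl
      have hL : resMatrix ![g₁,g₂,g₃] ⟨⟨1,hkp⟩,ip⟩ q
          = if (ip:ℕ) ≤ resPos q then (g₁*g₃).coeff (resPos q - (ip:ℕ)) else 0 := by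
        show (if (ip:ℕ) ≤ resPos q then
          (∏ j ∈ Finset.univ.erase (⟨1,hkp⟩:Fin 3), ![g₁,g₂,g₃] j).coeff (resPos q - (ip:ℕ)) else 0) = _
        rw [hprod3_1 hkp]
      rw [hL]
      simp only [hφp, hφ0, hφ1, hφ2, he1, he2, Matrix.fromBlocks_apply₂₁, Matrix.fromBlocks_apply₂₂,
        Matrix.zero_apply, zero_mul, Finset.sum_const_zero, zero_add,
        hSrow, hNrow, hposJ0, hposJ1, hprodJ0, hprod2_1]
      rw [Fin.sum_univ_eq_sum_range (fun v => (if (ip:ℕ) ≤ v then g₃.coeff (v - (ip:ℕ)) else 0)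
            * (if v ≤ resPos q then g₁.coeff (resPos q - v) else 0)),
          Fin.sum_univ_eq_sum_range (fun v => (if (ip:ℕ) ≤ g₂.natDegree + v then g₃.coeff (g₂.natDegree + v - (ip:ℕ)) else 0)
            * (if g₂.natDegree + v ≤ resPos q then g₁.coeff (resPos q - (g₂.natDegree + v)) else 0))]
      rw [show ((![g₁,g₂,g₃] (1:Fin 3)).natDegree) = g₂.natDegree from rfl,
          show ((![g₁,g₂,g₃] (2:Fin 3)).natDegree) = g₃.natDegree from rfl]
      rw [← Finset.sum_range_add (fun v => (if (ip:ℕ) ≤ v then g₃.coeff (v - (ip:ℕ)) else 0)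
            * (if v ≤ resPos q then g₁.coeff (resPos q - v) else 0)) g₂.natDegree g₃.natDegree]
      rw [show (∑ v ∈ Finset.range (g₂.natDegree + g₃.natDegree),
            (if (ip:ℕ) ≤ v then g₃.coeff (v - (ip:ℕ)) else 0)
              * (if v ≤ resPos q then g₁.coeff (resPos q - v) else 0))
          = ∑ v ∈ Finset.range (g₂.natDegree + g₃.natDegree),
            (if (ip:ℕ) ≤ v ∧ v ≤ resPos q then g₃.coeff (v - (ip:ℕ)) * g₁.coeff (resPos q - v) else 0)
          from Finset.sum_congr rfl (fun v _ => by
            by_cases hA : (ip:ℕ) ≤ v <;> by_cases hB : v ≤ resPos q <;> simp [hA, hB])]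
      rw [sum_band g₁ g₃ (ip:ℕ) (resPos q) _ (by
        have hx : (ip:ℕ) < g₂.natDegree := ip.isLt
        omega)]
    · -- block 2 row
      have hφp : myPhi g₁ g₂ g₃ ⟨⟨2,hkp⟩,ip⟩ = (Sum.inr ⟨⟨1,h12⟩, ⟨(ip:ℕ), show (ip:ℕ) < ((![g₂,g₃] : Fin 2 → Polynomial R) ⟨1,h12⟩).natDegree from ip.isLt⟩⟩ : Fin g₁.natDegree ⊕ ((k : Fin 2) × Fin ((![g₂,g₃] k).natDegree))) := rfl
      have hL : resMatrix ![g₁,g₂,g₃] ⟨⟨2,hkp⟩,ip⟩ q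
          = if (ip:ℕ) ≤ resPos q then (g₁*g₂).coeff (resPos q - (ip:ℕ)) else 0 := by
        show (if (ip:ℕ) ≤ resPos q then
          (∏ j ∈ Finset.univ.erase (⟨2,hkp⟩:Fin 3), ![g₁,g₂,g₃] j).coeff (resPos q - (ip:ℕ)) else 0) = _
        rw [hprod3_2 hkp]
      rw [hL]
      simp only [hφp, hφ0, hφ1, hφ2, he1, he2, Matrix.fromBlocks_apply₂₁, Matrix.fromBlocks_apply₂₂,
        Matrix.zero_apply, zero_mul, Finset.sum_const_zero, zero_add,
        hSrow, hNrow, hposJ0, hposJ1, hprodJ1, hprod2_1]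
      rw [Fin.sum_univ_eq_sum_range (fun v => (if (ip:ℕ) ≤ v then g₂.coeff (v - (ip:ℕ)) else 0)
            * (if v ≤ resPos q then g₁.coeff (resPos q - v) else 0)),
          Fin.sum_univ_eq_sum_range (fun v => (if (ip:ℕ) ≤ g₂.natDegree + v then g₂.coeff (g₂.natDegree + v - (ip:ℕ)) else 0)
            * (if g₂.natDegree + v ≤ resPos q then g₁.coeff (resPos q - (g₂.natDegree + v)) else 0))]
      rw [show ((![g₁,g₂,g₃] (1:Fin 3)).natDegree) = g₂.natDegree from rfl,
          show ((![g₁,g₂,g₃] (2:Fin 3)).natDegree) = g₃.natDegree from rfl]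
      rw [← Finset.sum_range_add (fun v => (if (ip:ℕ) ≤ v then g₂.coeff (v - (ip:ℕ)) else 0)
            * (if v ≤ resPos q then g₁.coeff (resPos q - v) else 0)) g₂.natDegree g₃.natDegree]
      rw [show (∑ v ∈ Finset.range (g₂.natDegree + g₃.natDegree),
            (if (ip:ℕ) ≤ v then g₂.coeff (v - (ip:ℕ)) else 0)
              * (if v ≤ resPos q then g₁.coeff (resPos q - v) else 0))
          = ∑ v ∈ Finset.range (g₂.natDegree + g₃.natDegree),
            (if (ip:ℕ) ≤ v ∧ v ≤ resPos q then g₂.coeff (v - (ip:ℕ)) * g₁.coeff (resPos q - v) else 0)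
          from Finset.sum_congr rfl (fun v _ => by
            by_cases hA : (ip:ℕ) ≤ v <;> by_cases hB : v ≤ resPos q <;> simp [hA, hB])]
      rw [sum_band g₁ g₂ (ip:ℕ) (resPos q) _ (by
        have hx : (ip:ℕ) < g₃.natDegree := ip.isLt
        omega)]
  rw [show genRes ![g₁,g₂,g₃] = (resMatrix ![g₁,g₂,g₃]).det from rfl, hmain, Matrix.det_mul,
    Matrix.det_submatrix_equiv_self, Matrix.det_submatrix_equiv_self,
    Matrix.det_fromBlocks_zero₂₁, Matrix.det_one, one_mul, mul_comm]
  rfl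

end

theorem genRes_three_eq_mul
    {R : Type*} [CommRing R] [IsDomain R] [IsDiscreteValuationRing R]
    (π : R) (hπ : Irreducible π)
    (g₁ g₂ g₃ : Polynomial R)
    (h₁ : g₁.Monic) (h₂ : g₂.Monic) (h₃ : g₃.Monic)
    (hd₁ : 1 ≤ g₁.natDegree) (hd₂ : 1 ≤ g₂.natDegree) (hd₃ : 1 ≤ g₃.natDegree)
    (hres : genRes ![g₁, g₂, g₃] ≠ 0)
    (t t₁ t₀ : ℕ)
    (ht : π ^ t ∣ genRes ![g₁, g₂, g₃] ∧ ¬ π ^ (t + 1) ∣ genRes ![g₁, g₂, g₃])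
    (ht₁ : π ^ t₁ ∣ genRes ![g₁, g₂ * g₃] ∧ ¬ π ^ (t₁ + 1) ∣ genRes ![g₁, g₂ * g₃])
    (ht₀ : π ^ t₀ ∣ genRes ![g₂, g₃] ∧ ¬ π ^ (t₀ + 1) ∣ genRes ![g₂, g₃]) :
    genRes ![g₁, g₂, g₃] = genRes ![g₁, g₂ * g₃] * genRes ![g₂, g₃] ∧ t = t₁ + t₀ := by
  have hdeg : (g₂ * g₃).natDegree = g₂.natDegree + g₃.natDegree := h₂.natDegree_mul h₃
  have hmul : genRes ![g₁,g₂,g₃] = genRes ![g₁,g₂*g₃] * genRes ![g₂,g₃] := key3 g₁ g₂ g₃ hdeg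
  refine ⟨hmul, ?_⟩
  have hπp : Prime π := hπ.prime
  obtain ⟨hta, htb⟩ := ht
  obtain ⟨h1a, h1b⟩ := ht₁
  obtain ⟨h0a, h0b⟩ := ht₀
  obtain ⟨y₁, hy₁⟩ := h1a
  obtain ⟨z₁, hz₁⟩ := h0a
  have hy₁π : ¬ π ∣ y₁ := by
    rintro ⟨c, hc⟩
    exact h1b ⟨c, by rw [hy₁, hc]; ring⟩
  have hz₁π : ¬ π ∣ z₁ := by
    rintro ⟨c, hc⟩
    exact h0b ⟨c, by rw [hz₁, hc]; ring⟩
  have hx : genRes ![g₁,g₂,g₃] = π ^ (t₁ + t₀) * (y₁ * z₁) := by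
    rw [hmul, hy₁, hz₁]; ring
  have hd' : π ^ (t₁ + t₀) ∣ genRes ![g₁,g₂,g₃] := ⟨y₁ * z₁, hx⟩
  have hnd' : ¬ π ^ (t₁ + t₀ + 1) ∣ genRes ![g₁,g₂,g₃] := by
    rintro ⟨c, hc⟩
    have hpow : (π:R) ^ (t₁ + t₀) ≠ 0 := pow_ne_zero _ hπ.ne_zero
    have hyz : y₁ * z₁ = π * c := by
      apply mul_left_cancel₀ hpow
      rw [← hx, hc, pow_succ]; ring
    rcases hπp.2.2 y₁ z₁ ⟨c, hyz⟩ with h | h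
    · exact hy₁π h
    · exact hz₁π h
  rcases Nat.lt_trichotomy t (t₁ + t₀) with h | h | h
  · exact absurd (dvd_trans (pow_dvd_pow π (by omega : t + 1 ≤ t₁ + t₀)) hd') htb
  · exact h
  · exact absurd (dvd_trans (pow_dvd_pow π (by omega : t₁ + t₀ + 1 ≤ t)) hta) hnd'
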